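/- Let d ≥ 1 be an integer, let B ∈ GL_d(ℝ), and let σ > d/2 be real. Then there exist constants 0 < c ≤ C such that for every y ≥ 1 and every θ₀ ∈ ℝ^d, c·y^d ≤ Σ_{θ ∈ ℤ^d} exp(−2σ·arsinh(‖Bθ − θ₀‖/(2y))) ≤ C·y^d. -/

import Mathlib

open ENNReal
open scoped NNReal

private lemma stmt7_pi_prod : ∀ (d : ℕ) (f : Fin d → ℤ → ℝ≥0∞),
    ∑' θ : Fin d → ℤ, ∏ i, f i (θ i) = ∏ i, ∑' n, f i n := by
  intro d
  induction d with
  | zero =>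
    intro f
    simp [tsum_eq_single (fun (i : Fin 0) => (0:ℤ))
      (fun b hb => absurd (Subsingleton.elim b _) hb)]
  | succ n ih =>
    intro f
    rw [← (Fin.consEquiv fun _ => ℤ).tsum_eq, Fin.prod_univ_succ]
    rw [ENNReal.tsum_prod' (f := fun c => ∏ i, f i ((Fin.consEquiv fun _ => ℤ) c i))]
    have key : ∀ (a : ℤ) (g : Fin n → ℤ), ∏ i, f i ((Fin.consEquiv fun _ => ℤ) (a, g) i)
        = f 0 a * ∏ i, f i.succ (g i) := by
      intro a g
      rw [Fin.prod_univ_succ]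
      simp [Fin.consEquiv, Fin.cons_zero, Fin.cons_succ]
    simp_rw [key, ENNReal.tsum_mul_left, ENNReal.tsum_mul_right, ih]

private lemma stmt7_summable_aux {p : ℝ} (hp : 1 < p) :
    Summable (fun q : ℕ => ((q : ℝ) + 1) ^ (-p)) := by
  have h := Real.summable_nat_rpow.2 (show -p < -1 by linarith)
  have h2 := (summable_nat_add_iff 1).2 h
  refine h2.congr fun n => ?_
  push_cast
  ring_nf

private lemma stmt7_nat_sum_le {p : ℝ} (hp : 1 < p) {c : ℝ} (hc : 1 ≤ c) :
    ∑' k : ℕ, ENNReal.ofReal ((1 + (k : ℝ) / c) ^ (-p)) ≤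
      ENNReal.ofReal ((2 * c) * ∑' q : ℕ, ((q : ℝ) + 1) ^ (-p)) := by
  have hc0 : (0:ℝ) < c := lt_of_lt_of_le one_pos hc
  set m : ℕ := ⌈c⌉₊ with hm
  haveI : NeZero m := ⟨by positivity⟩
  have hmc : (m : ℝ) ≤ 2 * c := Nat.ceil_le_two_mul (by linarith)
  rw [← (Nat.divModEquiv m).symm.tsum_eq, ENNReal.tsum_prod'
    (f := fun x => ENNReal.ofReal ((1 + (((Nat.divModEquiv m).symm x : ℕ) : ℝ) / c) ^ (-p)))]
  calc ∑' (q : ℕ) (r : Fin m),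
        ENNReal.ofReal ((1 + (((Nat.divModEquiv m).symm (q, r) : ℕ) : ℝ) / c) ^ (-p))
      ≤ ∑' (q : ℕ) (_ : Fin m), ENNReal.ofReal (((q : ℝ) + 1) ^ (-p)) := by
        refine ENNReal.tsum_le_tsum fun q => ENNReal.tsum_le_tsum fun r => ?_
        refine ENNReal.ofReal_le_ofReal ?_
        have hk : ((q : ℝ) * m + r) / c ≥ q := by
          rw [ge_iff_le, le_div_iff₀ hc0]
          have : (c : ℝ) ≤ m := Nat.le_ceil c
          nlinarith [r.2, (show (0:ℝ) ≤ q by positivity)]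
        have h1 : (q : ℝ) + 1 ≤ 1 + (((Nat.divModEquiv m).symm (q, r) : ℕ) : ℝ) / c := by
          simp only [Nat.divModEquiv_symm_apply]
          push_cast
          linarith
        exact Real.rpow_le_rpow_of_nonpos (by positivity) h1 (by linarith)
    _ = ∑' (q : ℕ), (m : ℝ≥0∞) * ENNReal.ofReal (((q : ℝ) + 1) ^ (-p)) := by
        congr 1; funext q; rw [tsum_fintype]; simp [Finset.sum_const, nsmul_eq_mul]
    _ ≤ ∑' (q : ℕ), ENNReal.ofReal (2 * c) * ENNReal.ofReal (((q : ℝ) + 1) ^ (-p)) := by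
        refine ENNReal.tsum_le_tsum fun q => ?_
        gcongr
        rw [show ((m : ℝ≥0∞) = ENNReal.ofReal (m : ℝ)) by simp]
        exact ENNReal.ofReal_le_ofReal hmc
    _ = ENNReal.ofReal (2 * c) * ∑' (q : ℕ), ENNReal.ofReal (((q : ℝ) + 1) ^ (-p)) :=
        ENNReal.tsum_mul_left
    _ = ENNReal.ofReal ((2 * c) * ∑' q : ℕ, ((q : ℝ) + 1) ^ (-p)) := by
        rw [← ENNReal.ofReal_tsum_of_nonneg (fun q => by positivity) (stmt7_summable_aux hp),
          ← ENNReal.ofReal_mul (by linarith)]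

private lemma stmt7_tsum_int_le (g : ℤ → ℝ≥0∞) (h : ℕ → ℝ≥0∞)
    (hg : ∀ j : ℤ, g j ≤ h j.natAbs) (hmono : ∀ k, h (k + 1) ≤ h k) :
    ∑' j : ℤ, g j ≤ 2 * ∑' k : ℕ, h k := by
  rw [← tsum_nat_add_neg_add_one (f := g) ENNReal.summable, two_mul, ← ENNReal.tsum_add]
  refine ENNReal.tsum_le_tsum fun n => add_le_add ?_ ?_
  · simpa using hg (n : ℤ)
  · refine le_trans (hg _) ?_
    have h1 : (Int.natAbs (-((n : ℤ) + 1))) = n + 1 := by omega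
    rw [h1]; exact hmono n

private lemma stmt7_int_sum_le {p : ℝ} (hp : 1 < p) {c : ℝ} (hc : 1 ≤ c) (w : ℝ) :
    ∑' n : ℤ, ENNReal.ofReal ((1 + |(n : ℝ) - w| / c) ^ (-p)) ≤
      ENNReal.ofReal (c * ((4 * 2 ^ p) * ∑' q : ℕ, ((q : ℝ) + 1) ^ (-p))) := by
  have hc0 : (0:ℝ) < c := lt_of_lt_of_le one_pos hc
  have hp0 : (0:ℝ) < p := lt_trans one_pos hp
  set m : ℤ := ⌈w⌉ with hm
  have hmw : (0:ℝ) ≤ (m : ℝ) - w := by simpa using Int.le_ceil w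
  have hmw1 : (m : ℝ) - w ≤ 1 := by
    have := Int.ceil_lt_add_one w; push_cast; linarith
  rw [← (Equiv.addRight m).tsum_eq]
  have key : ∀ j : ℤ,
      ENNReal.ofReal ((1 + |((Equiv.addRight m) j : ℝ) - w| / c) ^ (-p)) ≤
      ENNReal.ofReal (2 ^ p * (1 + ((j.natAbs : ℕ) : ℝ) / c) ^ (-p)) := by
    intro j
    refine ENNReal.ofReal_le_ofReal ?_
    have habs : ((j.natAbs : ℕ) : ℝ) = |(j : ℝ)| := by
      rw [Nat.cast_natAbs, Int.cast_abs]
    set x : ℝ := ((Equiv.addRight m) j : ℝ) - w with hx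
    set B : ℝ := 1 + ((j.natAbs : ℕ) : ℝ) / c with hBdef
    have hB : (0:ℝ) < B := by positivity
    have hxj : |(j : ℝ)| ≤ |x| + 1 := by
      have hjx : (j : ℝ) = x - ((m : ℝ) - w) := by
        simp only [hx, Equiv.coe_addRight]; push_cast; ring
      rw [hjx]
      calc |x - ((m:ℝ) - w)| ≤ |x| + |(m:ℝ) - w| := abs_sub _ _
        _ ≤ |x| + 1 := by rw [abs_of_nonneg hmw]; linarith
    have hhalf : B / 2 ≤ 1 + |x| / c := by
      rw [hBdef, habs]
      have h1c : 1 / c ≤ 1 := by rw [div_le_one hc0]; exact hc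
      have d1 : |(j:ℝ)| / c ≤ |x| / c + 1 / c := by
        rw [← add_div]; gcongr
      have d2 : (0:ℝ) ≤ |x| / c := by positivity
      linarith
    have step : (1 + |x| / c) ^ (-p) ≤ (B / 2) ^ (-p) :=
      Real.rpow_le_rpow_of_nonpos (by positivity) hhalf (by linarith)
    refine le_trans step (le_of_eq ?_)
    rw [Real.div_rpow (le_of_lt hB) (by norm_num : (0:ℝ) ≤ 2),
      Real.rpow_neg (by norm_num : (0:ℝ) ≤ 2), div_eq_mul_inv, inv_inv, mul_comm]
  calc ∑' j : ℤ, ENNReal.ofReal ((1 + |((Equiv.addRight m) j : ℝ) - w| / c) ^ (-p))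
      ≤ 2 * ∑' k : ℕ, ENNReal.ofReal (2 ^ p * (1 + (k : ℝ) / c) ^ (-p)) := by
        refine stmt7_tsum_int_le _ _ key fun k => ?_
        refine ENNReal.ofReal_le_ofReal ?_
        refine mul_le_mul_of_nonneg_left ?_ (by positivity)
        refine Real.rpow_le_rpow_of_nonpos (by positivity) ?_ (by linarith)
        push_cast
        have : (0:ℝ) < c := hc0
        gcongr
        linarith
    _ = 2 * (ENNReal.ofReal (2 ^ p) *
          ∑' k : ℕ, ENNReal.ofReal ((1 + (k : ℝ) / c) ^ (-p))) := by
        congr 1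
        simp_rw [ENNReal.ofReal_mul (by positivity : (0:ℝ) ≤ 2 ^ p)]
        rw [ENNReal.tsum_mul_left]
    _ ≤ 2 * (ENNReal.ofReal (2 ^ p) *
          ENNReal.ofReal ((2 * c) * ∑' q : ℕ, ((q : ℝ) + 1) ^ (-p))) := by
        gcongr
        exact stmt7_nat_sum_le hp hc
    _ = ENNReal.ofReal (c * ((4 * 2 ^ p) * ∑' q : ℕ, ((q : ℝ) + 1) ^ (-p))) := by
        rw [← ENNReal.ofReal_mul (by positivity),
          show ((2:ℝ≥0∞) = ENNReal.ofReal 2) by simp,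
          ← ENNReal.ofReal_mul (by norm_num)]
        congr 1
        ring

private lemma stmt7_mulVec_sq_le {d : ℕ} (M : Matrix (Fin d) (Fin d) ℝ) (x : Fin d → ℝ)
    (i : Fin d) :
    (M.mulVec x i) ^ 2 ≤ (∑ a, ∑ b, (M a b) ^ 2) * (∑ j, (x j) ^ 2) := by
  have h1 : M.mulVec x i = ∑ j, M i j * x j := rfl
  calc (M.mulVec x i) ^ 2 = (∑ j, M i j * x j) ^ 2 := by rw [h1]
    _ ≤ (∑ j, (M i j) ^ 2) * (∑ j, (x j) ^ 2) := Finset.sum_mul_sq_le_sq_mul_sq _ _ _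
    _ ≤ (∑ a, ∑ b, (M a b) ^ 2) * (∑ j, (x j) ^ 2) := by
        refine mul_le_mul_of_nonneg_right ?_ (by positivity)
        exact Finset.single_le_sum (f := fun a => ∑ b, (M a b) ^ 2)
          (fun a _ => by positivity) (Finset.mem_univ i)

private lemma stmt7_exp_arsinh_le {σ u : ℝ} (hσ : 0 < σ) (hu : 0 ≤ u) :
    Real.exp (-2 * σ * Real.arsinh u) ≤ (1 + u) ^ (-(2 * σ)) := by
  have h1u : (0:ℝ) < 1 + u := by linarith
  rw [Real.rpow_def_of_pos h1u]
  apply Real.exp_le_exp.2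
  have harsinh : Real.log (1 + u) ≤ Real.arsinh u := by
    rw [Real.arsinh]
    apply Real.log_le_log h1u
    have h2 : (1:ℝ) ≤ Real.sqrt (1 + u ^ 2) := by
      nlinarith [Real.sq_sqrt (show (0:ℝ) ≤ 1 + u ^ 2 by positivity),
        Real.sqrt_nonneg (1 + u ^ 2)]
    linarith
  nlinarith [harsinh]

private lemma stmt7_prod_bound {d : ℕ} {p u : ℝ} (hp : 0 < p) (a : Fin d → ℝ)
    (ha : ∀ i, 0 ≤ a i) (hau : ∀ i, a i ≤ u) (hu : 0 ≤ u) :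
    (1 + u) ^ (-((d : ℝ) * p)) ≤ ∏ i, (1 + a i) ^ (-p) := by
  have h1u : (0:ℝ) < 1 + u := by linarith
  have h1 : ∏ i, (1 + a i) ≤ (1 + u) ^ d := by
    calc ∏ i, (1 + a i) ≤ ∏ _i : Fin d, (1 + u) :=
          Finset.prod_le_prod (fun i _ => by linarith [ha i]) (fun i _ => by linarith [hau i])
      _ = (1 + u) ^ d := by rw [Finset.prod_const]; simp
  have h2 : ∏ i, (1 + a i) ^ (-p) = (∏ i, (1 + a i)) ^ (-p) :=
    Real.finset_prod_rpow _ _ (fun i _ => by linarith [ha i]) _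
  rw [h2]
  have h3 : ((1 + u) ^ d) ^ (-p) ≤ (∏ i, (1 + a i)) ^ (-p) := by
    refine Real.rpow_le_rpow_of_nonpos ?_ h1 (by linarith)
    exact Finset.prod_pos fun i _ => by linarith [ha i]
  refine le_trans (le_of_eq ?_) h3
  rw [← Real.rpow_natCast (1 + u) d, ← Real.rpow_mul h1u.le]
  congr 1
  ring

set_option maxHeartbeats 2000000 in
/-- For `σ > d/2` there are constants `0 < c ≤ C` such that for every
`y ≥ 1` and `θ₀ ∈ ℝ^d`,
`c y^d ≤ Σ_{θ ∈ ℤ^d} exp(-2σ·arsinh(‖Bθ - θ₀‖/(2y))) ≤ C y^d`. -/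
theorem stmt7 (d : ℕ) (hd : 1 ≤ d) (B : Matrix (Fin d) (Fin d) ℝ) (hB : IsUnit B.det)
    (σ : ℝ) (hσ : (d : ℝ) / 2 < σ) :
    ∃ c C : ℝ, 0 < c ∧ c ≤ C ∧ ∀ y : ℝ, 1 ≤ y → ∀ θ₀ : Fin d → ℝ,
      c * y ^ d ≤ (∑' θ : Fin d → ℤ,
          Real.exp (-2 * σ * Real.arsinh
            (Real.sqrt (∑ i, (B.mulVec (fun j => (θ j : ℝ)) i - θ₀ i) ^ 2) / (2 * y)))) ∧
      (∑' θ : Fin d → ℤ,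
          Real.exp (-2 * σ * Real.arsinh
            (Real.sqrt (∑ i, (B.mulVec (fun j => (θ j : ℝ)) i - θ₀ i) ^ 2) / (2 * y))))
        ≤ C * y ^ d := by
  have hd0 : (0:ℝ) < d := by exact_mod_cast hd
  have hσ0 : 0 < σ := lt_of_le_of_lt (by positivity) hσ
  obtain ⟨A, hAB, hBA⟩ : ∃ A : Matrix (Fin d) (Fin d) ℝ, A * B = 1 ∧ B * A = 1 :=
    ⟨B⁻¹, Matrix.nonsing_inv_mul B hB, Matrix.mul_nonsing_inv B hB⟩
  set KA2 := ∑ a, ∑ b, (A a b) ^ 2 with hKA2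
  set KB2 := ∑ a, ∑ b, (B a b) ^ 2 with hKB2
  have hKA2n : 0 ≤ KA2 := by positivity
  have hKB2n : 0 ≤ KB2 := by positivity
  set K := Real.sqrt KA2 + 1 with hK
  have hK1 : 1 ≤ K := le_add_of_nonneg_left (Real.sqrt_nonneg _)
  set p := 2 * σ / d with hpdef
  have hp : 1 < p := by
    rw [hpdef, lt_div_iff₀ hd0]; linarith
  have hdp : (d : ℝ) * p = 2 * σ := by
    rw [hpdef]; field_simp
  set z := ∑' q : ℕ, ((q : ℝ) + 1) ^ (-p) with hzdef
  have hz0 : 0 ≤ z := tsum_nonneg fun q => by positivity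
  have h2p : (0:ℝ) ≤ 2 ^ p := Real.rpow_nonneg (by norm_num) p
  set E1 := 4 * 2 ^ p * z with hE1
  have hE10 : 0 ≤ E1 := mul_nonneg (mul_nonneg (by norm_num) h2p) hz0
  set Cc := (2 * K * E1) ^ d with hCc
  have hK0 : (0:ℝ) ≤ K := by linarith
  have hCc0 : 0 ≤ Cc := pow_nonneg (mul_nonneg (mul_nonneg (by norm_num) hK0) hE10) d
  set Klow := Real.sqrt KB2 * d with hKlow
  set c0 := Real.exp (-2 * σ * Real.arsinh Klow) with hc0
  have hc0pos : 0 < c0 := Real.exp_pos _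
  refine ⟨c0, Cc + c0, hc0pos, le_add_of_nonneg_left hCc0, ?_⟩
  intro y hy θ₀
  have hy0 : (0:ℝ) < y := lt_of_lt_of_le one_pos hy
  set v := A.mulVec θ₀ with hv
  have hBv : B.mulVec v = θ₀ := by
    rw [hv, Matrix.mulVec_mulVec, hBA, Matrix.one_mulVec]
  set f : (Fin d → ℤ) → ℝ := fun θ => Real.exp (-2 * σ * Real.arsinh
      (Real.sqrt (∑ i, (B.mulVec (fun j => (θ j : ℝ)) i - θ₀ i) ^ 2) / (2 * y))) with hfdef
  have hfpos : ∀ θ, 0 < f θ := fun θ => Real.exp_pos _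
  -- coordinates and matrix estimates
  have hxu : ∀ (θ : Fin d → ℤ) (i : Fin d), (θ i : ℝ) - v i =
      A.mulVec (fun k => B.mulVec (fun j => (θ j : ℝ)) k - θ₀ k) i := by
    intro θ i
    have e1 : (fun k => B.mulVec (fun j => (θ j : ℝ)) k - θ₀ k)
        = B.mulVec (fun j => (θ j : ℝ)) - θ₀ := rfl
    rw [e1, Matrix.mulVec_sub, Matrix.mulVec_mulVec, hAB, Matrix.one_mulVec]
    simp [hv]
  -- upper bound, pointwise
  have hrsq : ∀ θ : Fin d → ℤ,
      (Real.sqrt (∑ i, (B.mulVec (fun j => (θ j : ℝ)) i - θ₀ i) ^ 2)) ^ 2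
        = ∑ i, (B.mulVec (fun j => (θ j : ℝ)) i - θ₀ i) ^ 2 := by
    intro θ
    exact Real.sq_sqrt (by positivity)
  have hcoord_le : ∀ (θ : Fin d → ℤ) (i : Fin d), |(θ i : ℝ) - v i| ≤
      Real.sqrt KA2 * Real.sqrt (∑ i, (B.mulVec (fun j => (θ j : ℝ)) i - θ₀ i) ^ 2) := by
    intro θ i
    have h2 := stmt7_mulVec_sq_le A (fun k => B.mulVec (fun j => (θ j : ℝ)) k - θ₀ k) i
    rw [← hxu θ i] at h2
    have h3 : ((θ i : ℝ) - v i) ^ 2 ≤ KA2 *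
        (Real.sqrt (∑ i, (B.mulVec (fun j => (θ j : ℝ)) i - θ₀ i) ^ 2)) ^ 2 := by
      rw [hrsq θ]; exact h2
    have h4 : |(θ i : ℝ) - v i| = Real.sqrt (((θ i : ℝ) - v i) ^ 2) :=
      (Real.sqrt_sq_eq_abs _).symm
    rw [h4]
    calc Real.sqrt (((θ i : ℝ) - v i) ^ 2)
        ≤ Real.sqrt (KA2 * (Real.sqrt (∑ i, (B.mulVec (fun j => (θ j : ℝ)) i - θ₀ i) ^ 2)) ^ 2) :=
          Real.sqrt_le_sqrt h3
      _ = Real.sqrt KA2 * Real.sqrt (∑ i, (B.mulVec (fun j => (θ j : ℝ)) i - θ₀ i) ^ 2) := by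
          rw [Real.sqrt_mul hKA2n, Real.sqrt_sq (Real.sqrt_nonneg _)]
  have hup_pt : ∀ θ : Fin d → ℤ, f θ ≤
      ∏ i, (1 + |(θ i : ℝ) - v i| / (2 * y * K)) ^ (-p) := by
    intro θ
    simp only [hfdef]
    set rr := Real.sqrt (∑ i, (B.mulVec (fun j => (θ j : ℝ)) i - θ₀ i) ^ 2) with hrr
    have hrr0 : 0 ≤ rr := by rw [hrr]; exact Real.sqrt_nonneg _
    have hu0 : 0 ≤ rr / (2 * y) := by positivity
    refine le_trans (stmt7_exp_arsinh_le hσ0 hu0) ?_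
    rw [← hdp]
    refine stmt7_prod_bound (p := p) (u := rr / (2 * y))
      (a := fun i => |(θ i : ℝ) - v i| / (2 * y * K)) (by linarith)
      (fun i => div_nonneg (abs_nonneg _) (by positivity)) (fun i => ?_) hu0
    have h1 := hcoord_le θ i
    rw [← hrr] at h1
    have hKA : Real.sqrt KA2 ≤ K := by rw [hK]; linarith
    rw [div_le_div_iff₀ (by positivity) (by positivity)]
    calc |(θ i : ℝ) - v i| * (2 * y) ≤ (Real.sqrt KA2 * rr) * (2 * y) := by
          refine mul_le_mul_of_nonneg_right ?_ (by positivity)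
          exact h1
      _ ≤ rr * (2 * y * K) := by rw [hK]; nlinarith [hrr0, hy0]
  -- ENNReal upper bound
  have key1 : ∑' θ : Fin d → ℤ, ENNReal.ofReal (f θ) ≤ ENNReal.ofReal (Cc * y ^ d) := by
    have hcK : (1:ℝ) ≤ 2 * y * K := by nlinarith
    calc ∑' θ : Fin d → ℤ, ENNReal.ofReal (f θ)
        ≤ ∑' θ : Fin d → ℤ, ∏ i, ENNReal.ofReal ((1 + |(θ i : ℝ) - v i| / (2 * y * K)) ^ (-p)) := by
          refine ENNReal.tsum_le_tsum fun θ => ?_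
          rw [← ENNReal.ofReal_prod_of_nonneg (fun i _ => by positivity)]
          exact ENNReal.ofReal_le_ofReal (hup_pt θ)
      _ = ∏ i, ∑' n : ℤ, ENNReal.ofReal ((1 + |(n : ℝ) - v i| / (2 * y * K)) ^ (-p)) :=
          stmt7_pi_prod d (fun i n => ENNReal.ofReal ((1 + |(n : ℝ) - v i| / (2 * y * K)) ^ (-p)))
      _ ≤ ∏ _i : Fin d, ENNReal.ofReal ((2 * y * K) * ((4 * 2 ^ p) * z)) := by
          refine Finset.prod_le_prod' fun i _ => ?_
          exact stmt7_int_sum_le hp hcK (v i)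
      _ = ENNReal.ofReal (Cc * y ^ d) := by
          rw [Finset.prod_const, Finset.card_univ, Fintype.card_fin,
            ← ENNReal.ofReal_pow (mul_nonneg (by positivity) (mul_nonneg (mul_nonneg (by norm_num) h2p) hz0))]
          congr 1
          rw [hCc, hE1, ← mul_pow]
          congr 1
          ring
  have hne : (∑' θ : Fin d → ℤ, ENNReal.ofReal (f θ)) ≠ ⊤ :=
    ne_top_of_le_ne_top ENNReal.ofReal_ne_top key1
  have hsumm : Summable f := by
    have h1 : (∑' θ : Fin d → ℤ, ((Real.toNNReal (f θ) : ℝ≥0) : ℝ≥0∞)) ≠ ⊤ := by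
      simpa [ENNReal.ofReal] using hne
    have h2 := ENNReal.tsum_coe_ne_top_iff_summable.1 h1
    have h3 := NNReal.summable_coe.2 h2
    exact h3.congr fun θ => Real.coe_toNNReal _ (hfpos θ).le
  have hUB : ∑' θ : Fin d → ℤ, f θ ≤ Cc * y ^ d := by
    have heq := ENNReal.ofReal_tsum_of_nonneg (fun θ => (hfpos θ).le) hsumm
    rw [← heq] at key1
    exact (ENNReal.ofReal_le_ofReal_iff (by positivity)).1 key1
  -- lower bound
  set N : ℤ := ⌊y⌋ with hN
  have hN1 : 1 ≤ N := by
    rw [hN, Int.le_floor]; exact_mod_cast hy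
  have hNy : (N : ℝ) ≤ y := Int.floor_le y
  have hyN : y ≤ (N : ℝ) + 1 := (Int.lt_floor_add_one y).le
  set Sbox := Fintype.piFinset (fun i : Fin d => Finset.Icc (⌊v i⌋) (⌊v i⌋ + N)) with hSbox
  have hcard : (Sbox.card : ℝ) = (((N + 1).toNat : ℕ) : ℝ) ^ d := by
    rw [hSbox, Fintype.card_piFinset]
    have : ∀ i : Fin d, (Finset.Icc (⌊v i⌋) (⌊v i⌋ + N)).card = (N + 1).toNat := by
      intro i; rw [Int.card_Icc]; congr 1; ring
    simp only [this]
    rw [Finset.prod_const, Finset.card_univ, Fintype.card_fin]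
    push_cast
    rfl
  have hNtoNat : (((N + 1).toNat : ℕ) : ℝ) = (N : ℝ) + 1 := by
    have : (0:ℤ) ≤ N + 1 := by omega
    rw [show (((N + 1).toNat : ℕ) : ℝ) = (((N + 1).toNat : ℤ) : ℝ) by push_cast; ring,
      Int.toNat_of_nonneg this]
    push_cast; ring
  have hcard2 : y ^ d ≤ (Sbox.card : ℝ) := by
    rw [hcard, hNtoNat]
    exact pow_le_pow_left₀ hy0.le (by linarith) d
  have hlow_pt : ∀ θ ∈ Sbox, c0 ≤ f θ := by
    intro θ hθ
    have hmem : ∀ i, θ i ∈ Finset.Icc (⌊v i⌋) (⌊v i⌋ + N) := by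
      intro i
      exact Fintype.mem_piFinset.1 hθ i
    have hcoord : ∀ i, ((θ i : ℝ) - v i) ^ 2 ≤ (2 * y) ^ 2 := by
      intro i
      obtain ⟨h1, h2⟩ := Finset.mem_Icc.1 (hmem i)
      have l1 : ((⌊v i⌋ : ℤ) : ℝ) ≤ v i := Int.floor_le _
      have l2 : v i < ((⌊v i⌋ : ℤ) : ℝ) + 1 := Int.lt_floor_add_one _
      have c1 : ((θ i : ℤ) : ℝ) ≤ ((⌊v i⌋ : ℤ) : ℝ) + (N : ℝ) := by exact_mod_cast h2
      have c2 : ((⌊v i⌋ : ℤ) : ℝ) ≤ ((θ i : ℤ) : ℝ) := by exact_mod_cast h1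
      nlinarith
    have hBx : (fun k => B.mulVec (fun j => (θ j : ℝ)) k - θ₀ k)
        = B.mulVec (fun j => (θ j : ℝ) - v j) := by
      have e1 : (fun j => (θ j : ℝ) - v j) = (fun j => (θ j : ℝ)) - v := rfl
      rw [e1, Matrix.mulVec_sub, hBv]
      rfl
    have hsum : ∑ i, (B.mulVec (fun j => (θ j : ℝ)) i - θ₀ i) ^ 2 ≤
        (Real.sqrt KB2 * d * (2 * y)) ^ 2 := by
      have hterm : ∀ i, (B.mulVec (fun j => (θ j : ℝ)) i - θ₀ i) ^ 2 ≤
          KB2 * ((d : ℝ) * (2 * y) ^ 2) := by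
        intro i
        have h5 : (B.mulVec (fun j => (θ j : ℝ)) i - θ₀ i) ^ 2
            = (B.mulVec (fun j => (θ j : ℝ) - v j) i) ^ 2 := by
          rw [show B.mulVec (fun j => (θ j : ℝ)) i - θ₀ i
              = (fun k => B.mulVec (fun j => (θ j : ℝ)) k - θ₀ k) i from rfl, hBx]
        rw [h5]
        refine le_trans (stmt7_mulVec_sq_le B _ i) ?_
        refine mul_le_mul_of_nonneg_left ?_ hKB2n
        calc ∑ j, ((θ j : ℝ) - v j) ^ 2 ≤ ∑ _j : Fin d, (2 * y) ^ 2 :=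
              Finset.sum_le_sum fun j _ => hcoord j
          _ = (d : ℝ) * (2 * y) ^ 2 := by
              rw [Finset.sum_const, Finset.card_univ, Fintype.card_fin, nsmul_eq_mul]
      calc ∑ i, (B.mulVec (fun j => (θ j : ℝ)) i - θ₀ i) ^ 2
          ≤ ∑ _i : Fin d, KB2 * ((d : ℝ) * (2 * y) ^ 2) := Finset.sum_le_sum fun i _ => hterm i
        _ = (d : ℝ) * (KB2 * ((d : ℝ) * (2 * y) ^ 2)) := by
            rw [Finset.sum_const, Finset.card_univ, Fintype.card_fin, nsmul_eq_mul]
        _ = (Real.sqrt KB2 * d * (2 * y)) ^ 2 := by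
            have hs : Real.sqrt KB2 ^ 2 = KB2 := Real.sq_sqrt hKB2n
            rw [show (Real.sqrt KB2 * (d:ℝ) * (2*y)) ^ 2
                = Real.sqrt KB2 ^ 2 * ((d:ℝ) ^ 2 * (2*y) ^ 2) by ring, hs]
            ring
    have hrle : Real.sqrt (∑ i, (B.mulVec (fun j => (θ j : ℝ)) i - θ₀ i) ^ 2) ≤
        Real.sqrt KB2 * d * (2 * y) := by
      refine le_trans (Real.sqrt_le_sqrt hsum) ?_
      rw [Real.sqrt_sq (by positivity)]
    have harg : Real.sqrt (∑ i, (B.mulVec (fun j => (θ j : ℝ)) i - θ₀ i) ^ 2) / (2 * y)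
        ≤ Klow := by
      rw [div_le_iff₀ (by positivity), hKlow]
      calc Real.sqrt (∑ i, (B.mulVec (fun j => (θ j : ℝ)) i - θ₀ i) ^ 2)
          ≤ Real.sqrt KB2 * d * (2 * y) := hrle
        _ = Real.sqrt KB2 * (d : ℝ) * (2 * y) := rfl
    rw [hc0, hfdef]
    apply Real.exp_le_exp.2
    have hmono : Real.arsinh (Real.sqrt (∑ i, (B.mulVec (fun j => (θ j : ℝ)) i - θ₀ i) ^ 2)
        / (2 * y)) ≤ Real.arsinh Klow := Real.arsinh_le_arsinh.2 harg
    nlinarith [hmono, hσ0]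
  have hLB : c0 * y ^ d ≤ ∑' θ : Fin d → ℤ, f θ := by
    calc c0 * y ^ d ≤ c0 * Sbox.card := mul_le_mul_of_nonneg_left hcard2 hc0pos.le
      _ = ∑ _θ ∈ Sbox, c0 := by rw [Finset.sum_const, nsmul_eq_mul, mul_comm]
      _ ≤ ∑ θ ∈ Sbox, f θ := Finset.sum_le_sum hlow_pt
      _ ≤ ∑' θ : Fin d → ℤ, f θ := hsumm.sum_le_tsum Sbox (fun θ _ => (hfpos θ).le)
  refine ⟨hLB, le_trans hUB ?_⟩
  nlinarith [hc0pos, pow_pos hy0 d]
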